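/- (Prékopa-type theorem on Wiener space, finite-dimensional consequence) Let g: ℝ^d × ℝ → ℝ be measurable such that (x,λ) ↦ g(x,λ) − |x|²/2 is concave, and suppose for each λ that E[(max{−g(Z,λ),0})^{1+δ}] < ∞ for some δ > 0, where Z is a standard d-dimensional Gaussian. Then λ ↦ log E[e^{g(Z,λ)}] ∈ (−∞, ∞] is concave. -/

import Mathlib

open MeasureTheory ProbabilityTheory
open Set ENNReal Pointwise NNReal

set_option linter.unusedVariables false


lemma one_dim_bm {A B S : Set ℝ} (hA : MeasurableSet A) (hB : MeasurableSet B)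
    (hAne : A.Nonempty) (hBne : B.Nonempty)
    (hsub : ∀ a ∈ A, ∀ b ∈ B, a + b ∈ S) :
    volume A + volume B ≤ volume S := by
  obtain ⟨a0, ha0⟩ := hAne
  obtain ⟨b0, hb0⟩ := hBne
  have hAS : b0 +ᵥ A ⊆ S := by
    rintro z ⟨a, ha, rfl⟩
    simpa [add_comm] using hsub a ha b0 hb0
  have hBS : a0 +ᵥ B ⊆ S := by
    rintro z ⟨b, hb, rfl⟩
    exact hsub a0 ha0 b hb
  by_cases hAinf : volume A = ∞
  · have : volume S = ∞ := by
      refine top_le_iff.1 ?_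
      calc (⊤ : ℝ≥0∞) = volume A := hAinf.symm
        _ = volume (b0 +ᵥ A) := (measure_vadd _ _ _).symm
        _ ≤ volume S := measure_mono hAS
    simp [this]
  by_cases hBinf : volume B = ∞
  · have : volume S = ∞ := by
      refine top_le_iff.1 ?_
      calc (⊤ : ℝ≥0∞) = volume B := hBinf.symm
        _ = volume (a0 +ᵥ B) := (measure_vadd _ _ _).symm
        _ ≤ volume S := measure_mono hBS
    simp [this]
  by_cases hA0 : volume A = 0
  · calc volume A + volume B = volume (a0 +ᵥ B) := by rw [hA0, zero_add, measure_vadd]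
      _ ≤ volume S := measure_mono hBS
  by_cases hB0 : volume B = 0
  · calc volume A + volume B = volume (b0 +ᵥ A) := by rw [hB0, add_zero, measure_vadd]
      _ ≤ volume S := measure_mono hAS
  -- main case
  refine ENNReal.le_of_forall_pos_le_add fun ε hε hS => ?_
  have hε2 : (ε : ℝ≥0∞) / 2 ≠ 0 := by
    simp [ENNReal.div_eq_zero_iff, hε.ne']
  have hεA : min ((ε : ℝ≥0∞)/2) (volume A) ≠ 0 := by
    simp only [ne_eq, min_eq_iff, not_or]
    exact ⟨fun h => hε2 h.1, fun h => hA0 h.1⟩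
  have hεB : min ((ε : ℝ≥0∞)/2) (volume B) ≠ 0 := by
    simp only [ne_eq, min_eq_iff, not_or]
    exact ⟨fun h => hε2 h.1, fun h => hB0 h.1⟩
  obtain ⟨K, hKA, hKc, hKv⟩ := hA.exists_isCompact_lt_add hAinf hεA
  obtain ⟨L, hLB, hLc, hLv⟩ := hB.exists_isCompact_lt_add hBinf hεB
  have hKne : K.Nonempty := by
    rw [nonempty_iff_ne_empty]
    rintro rfl
    simp only [measure_empty, zero_add] at hKv
    exact absurd (hKv.trans_le (min_le_right _ _)) (lt_irrefl _)
  have hLne : L.Nonempty := by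
    rw [nonempty_iff_ne_empty]
    rintro rfl
    simp only [measure_empty, zero_add] at hLv
    exact absurd (hLv.trans_le (min_le_right _ _)) (lt_irrefl _)
  set c := sInf K with hc
  set e := sSup L with he
  have hcK : c ∈ K := hKc.sInf_mem hKne
  have heL : e ∈ L := hLc.sSup_mem hLne
  set C1 := e +ᵥ K with hC1
  set C2 := c +ᵥ L with hC2
  have hC1S : C1 ⊆ S := by
    rintro z ⟨k, hk, rfl⟩
    simpa [add_comm] using hsub k (hKA hk) e (hLB heL)
  have hC2S : C2 ⊆ S := by
    rintro z ⟨l, hl, rfl⟩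
    exact hsub c (hKA hcK) l (hLB hl)
  have hinter : volume (C1 ∩ C2) = 0 := by
    refine measure_mono_null ?_ (Real.volume_singleton (a := c + e))
    rintro z ⟨⟨k, hk, rfl⟩, ⟨l, hl, hzl⟩⟩
    have h1 : c ≤ k := csInf_le hKc.bddBelow hk
    have h2 : l ≤ e := le_csSup hLc.bddAbove hl
    have hzl' : c + l = e + k := hzl
    have hk' : k = c := by linarith
    have : e + k = c + e := by rw [hk']; ring
    simpa [vadd_eq_add] using this
  have hunion : volume C1 + volume C2 ≤ volume S := by
    have := measure_union_add_inter (μ := volume) C1 (hLc.measurableSet.const_vadd c)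
    calc volume C1 + volume C2 = volume (C1 ∪ C2) + volume (C1 ∩ C2) := this.symm
      _ = volume (C1 ∪ C2) := by rw [hinter, add_zero]
      _ ≤ volume S := measure_mono (union_subset hC1S hC2S)
  have hKL : volume K = volume C1 := (measure_vadd _ _ _).symm
  have hLL : volume L = volume C2 := (measure_vadd _ _ _).symm
  calc volume A + volume B
      ≤ (volume K + min ((ε : ℝ≥0∞)/2) (volume A)) + (volume L + min ((ε : ℝ≥0∞)/2) (volume B)) :=
        add_le_add hKv.le hLv.le
    _ ≤ (volume K + (ε : ℝ≥0∞)/2) + (volume L + (ε : ℝ≥0∞)/2) :=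
        add_le_add (add_le_add le_rfl (min_le_left _ _)) (add_le_add le_rfl (min_le_left _ _))
    _ = (volume C1 + volume C2) + ((ε : ℝ≥0∞)/2 + (ε : ℝ≥0∞)/2) := by
        rw [hKL, hLL]; ring
    _ ≤ volume S + (ε : ℝ≥0∞) := by
        rw [ENNReal.add_halves]
        exact add_le_add hunion le_rfl

lemma tail_eq {α : Type*} [MeasurableSpace α] {μ : Measure α} [SFinite μ]
    {f : α → ℝ≥0∞} (hf : Measurable f) {A : ℝ≥0∞} (hA0 : A ≠ 0) (hAt : A ≠ ∞) :
    ∫⁻ s in Ioo (0:ℝ) 1, μ {x | ENNReal.ofReal s * A < f x} =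
      (∫⁻ x, min (f x) A ∂μ) / A := by
  have hT : MeasurableSet {p : ℝ × α | ENNReal.ofReal p.1 * A < f p.2} := by
    apply measurableSet_lt
    · exact (ENNReal.measurable_ofReal.comp measurable_fst).mul_const A
    · exact hf.comp measurable_snd
  have key : ∀ s : ℝ, μ {x | ENNReal.ofReal s * A < f x} =
      ∫⁻ x, {p : ℝ × α | ENNReal.ofReal p.1 * A < f p.2}.indicator 1 (s, x) ∂μ := by
    intro s
    have hms : MeasurableSet {x | ENNReal.ofReal s * A < f x} :=
      measurableSet_lt measurable_const hf
    rw [← lintegral_indicator_one hms]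
    exact lintegral_congr fun x => by
      by_cases hx : ENNReal.ofReal s * A < f x <;> simp [Set.indicator, hx]
  simp_rw [key]
  have hswap := lintegral_lintegral_swap (μ := volume.restrict (Ioo (0:ℝ) 1)) (ν := μ)
    (f := fun s x => {p : ℝ × α | ENNReal.ofReal p.1 * A < f p.2}.indicator 1 (s, x))
    (by
      have : Function.uncurry (fun s x =>
          ({p : ℝ × α | ENNReal.ofReal p.1 * A < f p.2}.indicator 1 (s, x) : ℝ≥0∞)) =
          {p : ℝ × α | ENNReal.ofReal p.1 * A < f p.2}.indicator 1 := rfl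
      rw [this]
      exact ((measurable_one.indicator hT)).aemeasurable)
  rw [hswap]
  have inner : ∀ x, (∫⁻ s in Ioo (0:ℝ) 1,
      {p : ℝ × α | ENNReal.ofReal p.1 * A < f p.2}.indicator 1 (s, x)) = min (f x) A / A := by
    intro x
    have hmA : min (f x) A / A ≤ 1 := by
      rw [ENNReal.div_le_iff hA0 hAt, one_mul]
      exact min_le_right _ _
    have hne : min (f x) A / A ≠ ∞ := (hmA.trans_lt one_lt_top).ne
    have hr1 : (min (f x) A / A).toReal ≤ 1 := by
      have := ENNReal.toReal_mono one_ne_top hmA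
      simpa using this
    have hind : ∀ s : ℝ, ({p : ℝ × α | ENNReal.ofReal p.1 * A < f p.2}.indicator 1 (s, x) : ℝ≥0∞)
        = {s : ℝ | ENNReal.ofReal s * A < f x}.indicator 1 s := by
      intro s
      by_cases hx : ENNReal.ofReal s * A < f x <;> simp [Set.indicator, hx]
    simp_rw [hind]
    have hmsx : MeasurableSet {s : ℝ | ENNReal.ofReal s * A < f x} := by
      apply measurableSet_lt
      · exact ENNReal.measurable_ofReal.mul_const A
      · exact measurable_const
    rw [lintegral_indicator_one hmsx]
    have hseteq : {s : ℝ | ENNReal.ofReal s * A < f x} ∩ Ioo (0:ℝ) 1 =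
        Ioo (0:ℝ) ((min (f x) A / A).toReal) := by
      ext s
      simp only [mem_inter_iff, mem_setOf_eq, mem_Ioo]
      constructor
      · rintro ⟨hcond, hs0, hs1⟩
        refine ⟨hs0, ?_⟩
        have hsA : ENNReal.ofReal s * A < A := by
          have : ENNReal.ofReal s < 1 := by
            rw [← ENNReal.ofReal_one]
            exact ENNReal.ofReal_lt_ofReal_iff_of_nonneg hs0.le |>.2 hs1
          calc ENNReal.ofReal s * A < 1 * A := ENNReal.mul_lt_mul_left hA0 hAt this
            _ = A := one_mul A
        have hlt : ENNReal.ofReal s < min (f x) A / A := by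
          rw [ENNReal.lt_div_iff_mul_lt (Or.inl hA0) (Or.inl hAt)]
          exact lt_min hcond hsA
        exact (ENNReal.ofReal_lt_iff_lt_toReal hs0.le hne).1 hlt
      · rintro ⟨hs0, hsr⟩
        have hs1 : s < 1 := lt_of_lt_of_le hsr hr1
        have hlt : ENNReal.ofReal s < min (f x) A / A :=
          (ENNReal.ofReal_lt_iff_lt_toReal hs0.le hne).2 hsr
        rw [ENNReal.lt_div_iff_mul_lt (Or.inl hA0) (Or.inl hAt)] at hlt
        exact ⟨lt_of_lt_of_le hlt (min_le_left _ _), hs0, hs1⟩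
    rw [Measure.restrict_apply hmsx, hseteq, Real.volume_Ioo, sub_zero,
      ENNReal.ofReal_toReal hne]
  simp_rw [inner]
  rw [ENNReal.div_eq_inv_mul]
  simp_rw [ENNReal.div_eq_inv_mul]
  rw [lintegral_const_mul _ (hf.min measurable_const)]

lemma geom_arith {u v : ℝ≥0∞} {θ : ℝ} (h0 : 0 < θ) (h1 : θ < 1) :
    u ^ θ * v ^ (1 - θ) ≤ ENNReal.ofReal θ * u + ENNReal.ofReal (1 - θ) * v := by
  have h1θ : 0 < 1 - θ := by linarith
  by_cases hu : u = ∞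
  · have : ENNReal.ofReal θ * u = ∞ := by
      rw [hu]
      exact ENNReal.mul_top (by simp only [ne_eq, ENNReal.ofReal_eq_zero, not_le]; linarith)
    rw [this, top_add]
    exact le_top
  by_cases hv : v = ∞
  · have : ENNReal.ofReal (1 - θ) * v = ∞ := by
      rw [hv]
      exact ENNReal.mul_top (by simp only [ne_eq, ENNReal.ofReal_eq_zero, not_le]; linarith)
    rw [this]
    exact le_top.trans_eq (add_top _).symm
  lift u to NNReal using hu
  lift v to NNReal using hv
  have hw : θ.toNNReal + (1 - θ).toNNReal = 1 := by
    rw [← NNReal.coe_inj]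
    push_cast
    rw [Real.coe_toNNReal _ h0.le, Real.coe_toNNReal _ h1θ.le]
    ring
  have key := NNReal.geom_mean_le_arith_mean2_weighted θ.toNNReal (1-θ).toNNReal u v hw
  have hc1 : ((θ.toNNReal : ℝ)) = θ := Real.coe_toNNReal _ h0.le
  have hc2 : (((1-θ).toNNReal : ℝ)) = 1 - θ := Real.coe_toNNReal _ h1θ.le
  rw [hc1, hc2] at key
  calc (u : ℝ≥0∞) ^ θ * (v : ℝ≥0∞) ^ (1 - θ)
      = ((u ^ θ * v ^ (1 - θ) : ℝ≥0) : ℝ≥0∞) := by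
        rw [ENNReal.coe_mul, ENNReal.coe_rpow_of_nonneg _ h0.le,
          ENNReal.coe_rpow_of_nonneg _ h1θ.le]
    _ ≤ ((θ.toNNReal * u + (1-θ).toNNReal * v : ℝ≥0) : ℝ≥0∞) := ENNReal.coe_le_coe.2 key
    _ = ENNReal.ofReal θ * u + ENNReal.ofReal (1 - θ) * v := by
        rw [ENNReal.coe_add, ENNReal.coe_mul, ENNReal.coe_mul]
        rfl

lemma pl_real_core {θ : ℝ} (h0 : 0 < θ) (h1 : θ < 1) {f g h : ℝ → ℝ≥0∞}
    (hf : Measurable f) (hg : Measurable g) (hh : Measurable h)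
    {N : ℝ≥0∞} (hN : N ≠ ∞) (hfN : ∀ x, f x ≤ N) (hgN : ∀ x, g x ≤ N)
    (hyp : ∀ x y, f x ^ θ * g y ^ (1 - θ) ≤ h (θ * x + (1 - θ) * y)) :
    (∫⁻ x, f x) ^ θ * (∫⁻ x, g x) ^ (1 - θ) ≤ ∫⁻ x, h x := by
  have h1θ : 0 < 1 - θ := by linarith
  set A := ⨆ x, f x with hA
  set B := ⨆ x, g x with hB
  by_cases hA0 : A = 0
  · have hf0 : ∀ x, f x = 0 := fun x => le_antisymm (hA0 ▸ le_iSup f x) zero_le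
    have : ∫⁻ x, f x = 0 := by simp [hf0]
    rw [this, ENNReal.zero_rpow_of_pos h0, zero_mul]
    exact zero_le
  by_cases hB0 : B = 0
  · have hg0 : ∀ x, g x = 0 := fun x => le_antisymm (hB0 ▸ le_iSup g x) zero_le
    have : ∫⁻ x, g x = 0 := by simp [hg0]
    rw [this, ENNReal.zero_rpow_of_pos h1θ, mul_zero]
    exact zero_le
  have hAt : A ≠ ∞ := ((iSup_le hfN).trans_lt hN.lt_top).ne
  have hBt : B ≠ ∞ := ((iSup_le hgN).trans_lt hN.lt_top).ne
  set M := A ^ θ * B ^ (1 - θ) with hM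
  have hAp0 : A ^ θ ≠ 0 := by
    rw [Ne, ENNReal.rpow_eq_zero_iff]
    rintro (⟨h', _⟩ | ⟨h', _⟩)
    exacts [hA0 h', hAt h']
  have hBp0 : B ^ (1 - θ) ≠ 0 := by
    rw [Ne, ENNReal.rpow_eq_zero_iff]
    rintro (⟨h', _⟩ | ⟨h', _⟩)
    exacts [hB0 h', hBt h']
  have hM0 : M ≠ 0 := mul_ne_zero hAp0 hBp0
  have hMt : M ≠ ∞ := ENNReal.mul_ne_top (ENNReal.rpow_ne_top_of_nonneg h0.le hAt)
    (ENNReal.rpow_ne_top_of_nonneg h1θ.le hBt)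
  -- key superlevel inequality
  have key : ∀ s ∈ Ioo (0:ℝ) 1,
      ENNReal.ofReal θ * volume {x | ENNReal.ofReal s * A < f x}
        + ENNReal.ofReal (1 - θ) * volume {x | ENNReal.ofReal s * B < g x}
        ≤ volume {x | ENNReal.ofReal s * M < h x} := by
    rintro s ⟨hs0, hs1⟩
    set S1 := {x | ENNReal.ofReal s * A < f x} with hS1
    set S2 := {x | ENNReal.ofReal s * B < g x} with hS2
    set S := {x | ENNReal.ofReal s * M < h x} with hS
    have hS1m : MeasurableSet S1 := measurableSet_lt measurable_const hf
    have hS2m : MeasurableSet S2 := measurableSet_lt measurable_const hg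
    have hsor : ENNReal.ofReal s < 1 := by
      rw [← ENNReal.ofReal_one]
      exact (ENNReal.ofReal_lt_ofReal_iff_of_nonneg hs0.le).2 hs1
    have hS1ne : S1.Nonempty := by
      have : ENNReal.ofReal s * A < A := by
        calc ENNReal.ofReal s * A < 1 * A := ENNReal.mul_lt_mul_left hA0 hAt hsor
          _ = A := one_mul A
      obtain ⟨x, hx⟩ := lt_iSup_iff.1 this
      exact ⟨x, hx⟩
    have hS2ne : S2.Nonempty := by
      have : ENNReal.ofReal s * B < B := by
        calc ENNReal.ofReal s * B < 1 * B := ENNReal.mul_lt_mul_left hB0 hBt hsor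
          _ = B := one_mul B
      obtain ⟨x, hx⟩ := lt_iSup_iff.1 this
      exact ⟨x, hx⟩
    have hsmul1 : θ • S1 = (fun x : ℝ => θ⁻¹ • x) ⁻¹' S1 := by
      ext x
      rw [Set.mem_smul_set_iff_inv_smul_mem₀ (ne_of_gt h0)]
      rfl
    have hsmul2 : (1 - θ) • S2 = (fun x : ℝ => (1 - θ)⁻¹ • x) ⁻¹' S2 := by
      ext x
      rw [Set.mem_smul_set_iff_inv_smul_mem₀ (ne_of_gt h1θ)]
      rfl
    have hbm := one_dim_bm (A := θ • S1) (B := (1 - θ) • S2) (S := S)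
      (by rw [hsmul1]; exact hS1m.preimage (measurable_const_smul _))
      (by rw [hsmul2]; exact hS2m.preimage (measurable_const_smul _))
      (hS1ne.smul_set) (hS2ne.smul_set)
      (by
        rintro a ⟨x, hx, rfl⟩ b ⟨y, hy, rfl⟩
        have hfx : (ENNReal.ofReal s * A) ^ θ < f x ^ θ := ENNReal.rpow_lt_rpow hx h0
        have hgy : (ENNReal.ofReal s * B) ^ (1 - θ) < g y ^ (1 - θ) :=
          ENNReal.rpow_lt_rpow hy h1θ
        have hlt : ENNReal.ofReal s * M < f x ^ θ * g y ^ (1 - θ) := by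
          have heq : (ENNReal.ofReal s * A) ^ θ * (ENNReal.ofReal s * B) ^ (1 - θ)
              = ENNReal.ofReal s * M := by
            rw [ENNReal.mul_rpow_of_nonneg _ _ h0.le, ENNReal.mul_rpow_of_nonneg _ _ h1θ.le,
              mul_mul_mul_comm, ← ENNReal.rpow_add _ _ (by simpa using hs0) ENNReal.ofReal_ne_top]
            norm_num [hM]
          rw [← heq]
          exact ENNReal.mul_lt_mul hfx hgy
        show ENNReal.ofReal s * M < h (θ • x + (1 - θ) • y)
        simp only [smul_eq_mul]
        exact lt_of_lt_of_le hlt (hyp x y))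
    have hv1 : volume (θ • S1) = ENNReal.ofReal θ * volume S1 := by
      rw [Measure.addHaar_smul volume θ S1]
      norm_num [abs_of_pos h0]
    have hv2 : volume ((1 - θ) • S2) = ENNReal.ofReal (1 - θ) * volume S2 := by
      rw [Measure.addHaar_smul volume (1 - θ) S2]
      norm_num [abs_of_pos h1θ]
    rw [hv1, hv2] at hbm
    exact hbm
  -- antitone tail functions are measurable
  have ant : ∀ (F : ℝ → ℝ≥0∞) (C : ℝ≥0∞),
      Antitone (fun s : ℝ => volume {x | ENNReal.ofReal s * C < F x}) := by
    intro F C s t hst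
    apply measure_mono
    intro x hx
    exact lt_of_le_of_lt (mul_le_mul_left (ENNReal.ofReal_le_ofReal hst) C) hx
  -- integrate the key inequality
  have int_ineq : ENNReal.ofReal θ * ((∫⁻ x, f x) / A)
      + ENNReal.ofReal (1 - θ) * ((∫⁻ x, g x) / B) ≤ (∫⁻ x, h x) / M := by
    have mono_ineq : ∫⁻ s in Ioo (0:ℝ) 1,
        (ENNReal.ofReal θ * volume {x | ENNReal.ofReal s * A < f x}
          + ENNReal.ofReal (1 - θ) * volume {x | ENNReal.ofReal s * B < g x})
        ≤ ∫⁻ s in Ioo (0:ℝ) 1, volume {x | ENNReal.ofReal s * M < h x} := by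
      refine lintegral_mono_ae ((ae_restrict_iff' measurableSet_Ioo).2
        (Filter.Eventually.of_forall key))
    have split : ∫⁻ s in Ioo (0:ℝ) 1,
        (ENNReal.ofReal θ * volume {x | ENNReal.ofReal s * A < f x}
          + ENNReal.ofReal (1 - θ) * volume {x | ENNReal.ofReal s * B < g x})
        = ENNReal.ofReal θ * ((∫⁻ x, f x) / A)
          + ENNReal.ofReal (1 - θ) * ((∫⁻ x, g x) / B) := by
      rw [lintegral_add_left (((ant f A).measurable).const_mul _),
        lintegral_const_mul _ (ant f A).measurable,
        lintegral_const_mul _ (ant g B).measurable,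
        tail_eq hf hA0 hAt, tail_eq hg hB0 hBt]
      congr 2
      · exact congrArg (· / A) (lintegral_congr fun x => min_eq_left (le_iSup f x))
      · exact congrArg (· / B) (lintegral_congr fun x => min_eq_left (le_iSup g x))
    have hright : ∫⁻ s in Ioo (0:ℝ) 1, volume {x | ENNReal.ofReal s * M < h x}
        ≤ (∫⁻ x, h x) / M := by
      rw [tail_eq hh hM0 hMt]
      exact ENNReal.div_le_div_right (lintegral_mono fun x => min_le_left _ _) M
    calc ENNReal.ofReal θ * ((∫⁻ x, f x) / A) + ENNReal.ofReal (1 - θ) * ((∫⁻ x, g x) / B)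
        = _ := split.symm
      _ ≤ _ := mono_ineq
      _ ≤ (∫⁻ x, h x) / M := hright
  -- conclude
  calc (∫⁻ x, f x) ^ θ * (∫⁻ x, g x) ^ (1 - θ)
      = (A * ((∫⁻ x, f x) / A)) ^ θ * (B * ((∫⁻ x, g x) / B)) ^ (1 - θ) := by
        rw [ENNReal.mul_div_cancel hA0 hAt, ENNReal.mul_div_cancel hB0 hBt]
    _ = M * (((∫⁻ x, f x) / A) ^ θ * ((∫⁻ x, g x) / B) ^ (1 - θ)) := by
        rw [ENNReal.mul_rpow_of_nonneg _ _ h0.le, ENNReal.mul_rpow_of_nonneg _ _ h1θ.le, hM]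
        ring
    _ ≤ M * (ENNReal.ofReal θ * ((∫⁻ x, f x) / A)
          + ENNReal.ofReal (1 - θ) * ((∫⁻ x, g x) / B)) :=
        mul_le_mul_right (geom_arith h0 h1) M
    _ ≤ M * ((∫⁻ x, h x) / M) := mul_le_mul_right int_ineq M
    _ ≤ ∫⁻ x, h x := ENNReal.mul_div_le

lemma iSup_mul_iSup_monotone (u v : ℕ → ℝ≥0∞) (hu : Monotone u) (hv : Monotone v) :
    (⨆ n, u n) * (⨆ n, v n) = ⨆ n, u n * v n := by
  refine le_antisymm ?_ (iSup_le fun n => mul_le_mul' (le_iSup u n) (le_iSup v n))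
  rw [ENNReal.iSup_mul]
  refine iSup_le fun n => ?_
  rw [ENNReal.mul_iSup]
  refine iSup_le fun m => ?_
  calc u n * v m ≤ u (max n m) * v (max n m) :=
        mul_le_mul' (hu (le_max_left n m)) (hv (le_max_right n m))
    _ ≤ ⨆ k, u k * v k := le_iSup (fun k => u k * v k) (max n m)

/-- The one-dimensional Prékopa–Leindler inequality over Lebesgue measure. -/
lemma pl_real {θ : ℝ} (h0 : 0 < θ) (h1 : θ < 1) {f g h : ℝ → ℝ≥0∞}
    (hf : Measurable f) (hg : Measurable g) (hh : Measurable h)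
    (hyp : ∀ x y, f x ^ θ * g y ^ (1 - θ) ≤ h (θ * x + (1 - θ) * y)) :
    (∫⁻ x, f x) ^ θ * (∫⁻ x, g x) ^ (1 - θ) ≤ ∫⁻ x, h x := by
  have h1θ : 0 < 1 - θ := by linarith
  have key : ∀ n : ℕ, (∫⁻ x, min (f x) n) ^ θ * (∫⁻ x, min (g x) n) ^ (1 - θ)
      ≤ ∫⁻ x, h x := by
    intro n
    refine pl_real_core h0 h1 (hf.min measurable_const) (hg.min measurable_const) hh
      (N := (n : ℝ≥0∞)) (ENNReal.natCast_ne_top n)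
      (fun x => min_le_right _ _) (fun x => min_le_right _ _) (fun x y => ?_)
    calc min (f x) n ^ θ * min (g y) n ^ (1 - θ)
        ≤ f x ^ θ * g y ^ (1 - θ) :=
          mul_le_mul' (ENNReal.rpow_le_rpow (min_le_left _ _) h0.le)
            (ENNReal.rpow_le_rpow (min_le_left _ _) h1θ.le)
      _ ≤ h (θ * x + (1 - θ) * y) := hyp x y
  have truncsup : ∀ (F : ℝ → ℝ≥0∞), Measurable F → (⨆ n : ℕ, ∫⁻ x, min (F x) n) = ∫⁻ x, F x := by
    intro F hF
    rw [← lintegral_iSup (fun n => hF.min measurable_const)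
      (fun n m hnm x => min_le_min le_rfl (Nat.cast_le.2 hnm))]
    refine lintegral_congr fun x => ?_
    refine le_antisymm (iSup_le fun n => min_le_left _ _) ?_
    refine le_of_forall_lt fun c hc => ?_
    obtain ⟨n, hn⟩ := ENNReal.exists_nat_gt (ne_top_of_lt hc)
    exact lt_of_lt_of_le (lt_min hc hn) (le_iSup (fun n : ℕ => min (F x) n) n)
  have mono_f : Monotone fun n : ℕ => ∫⁻ x, min (f x) n :=
    fun n m hnm => lintegral_mono fun x => min_le_min le_rfl (Nat.cast_le.2 hnm)
  have mono_g : Monotone fun n : ℕ => ∫⁻ x, min (g x) n :=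
    fun n m hnm => lintegral_mono fun x => min_le_min le_rfl (Nat.cast_le.2 hnm)
  have e1 : (∫⁻ x, f x) ^ θ = ⨆ n : ℕ, (∫⁻ x, min (f x) n) ^ θ := by
    rw [← truncsup f hf]
    exact ((ENNReal.orderIsoRpow θ h0).map_iSup _)
  have e2 : (∫⁻ x, g x) ^ (1 - θ) = ⨆ n : ℕ, (∫⁻ x, min (g x) n) ^ (1 - θ) := by
    rw [← truncsup g hg]
    exact ((ENNReal.orderIsoRpow (1 - θ) h1θ).map_iSup _)
  rw [e1, e2, iSup_mul_iSup_monotone _ _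
    (fun n m hnm => ENNReal.rpow_le_rpow (mono_f hnm) h0.le)
    (fun n m hnm => ENNReal.rpow_le_rpow (mono_g hnm) h1θ.le)]
  exact iSup_le key

/-- A measure satisfying the Prékopa–Leindler inequality. -/
def IsPLMeasure (E : Type*) [MeasurableSpace E] [AddCommMonoid E] [Module ℝ E]
    (μ : Measure E) : Prop :=
  ∀ θ : ℝ, 0 < θ → θ < 1 → ∀ f g h : E → ℝ≥0∞, Measurable f → Measurable g → Measurable h →
    (∀ x y, f x ^ θ * g y ^ (1 - θ) ≤ h (θ • x + (1 - θ) • y)) →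
    (∫⁻ x, f x ∂μ) ^ θ * (∫⁻ x, g x ∂μ) ^ (1 - θ) ≤ ∫⁻ x, h x ∂μ

lemma isPL_real : IsPLMeasure ℝ volume := by
  intro θ h0 h1 f g h hf hg hh hyp
  exact pl_real h0 h1 hf hg hh (fun x y => by simpa [smul_eq_mul] using hyp x y)

lemma isPL_prod {E F : Type*} [MeasurableSpace E] [MeasurableSpace F]
    [AddCommMonoid E] [Module ℝ E] [AddCommMonoid F] [Module ℝ F]
    {μ : Measure E} {ν : Measure F} [SFinite μ] [SFinite ν]
    (hE : IsPLMeasure E μ) (hF : IsPLMeasure F ν) :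
    IsPLMeasure (E × F) (μ.prod ν) := by
  intro θ h0 h1 f g h hf hg hh hyp
  set F1 : E → ℝ≥0∞ := fun x => ∫⁻ t, f (x, t) ∂ν with hF1
  set G1 : E → ℝ≥0∞ := fun x => ∫⁻ t, g (x, t) ∂ν with hG1
  set H1 : E → ℝ≥0∞ := fun x => ∫⁻ t, h (x, t) ∂ν with hH1
  have hF1m : Measurable F1 := hf.lintegral_prod_right'
  have hG1m : Measurable G1 := hg.lintegral_prod_right'
  have hH1m : Measurable H1 := hh.lintegral_prod_right'
  have hyp1 : ∀ x y : E, F1 x ^ θ * G1 y ^ (1 - θ) ≤ H1 (θ • x + (1 - θ) • y) := by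
    intro x y
    refine hF θ h0 h1 (fun t => f (x, t)) (fun t => g (y, t))
      (fun t => h (θ • x + (1 - θ) • y, t))
      (hf.comp (measurable_prodMk_left)) (hg.comp (measurable_prodMk_left))
      (hh.comp (measurable_prodMk_left)) (fun s t => ?_)
    have : (θ • x + (1 - θ) • y, θ • s + (1 - θ) • t)
        = θ • ((x, s) : E × F) + (1 - θ) • ((y, t) : E × F) := by
      simp [Prod.ext_iff]
    show f (x, s) ^ θ * g (y, t) ^ (1 - θ) ≤ h (θ • x + (1 - θ) • y, θ • s + (1 - θ) • t)
    rw [this]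
    exact hyp (x, s) (y, t)
  have main := hE θ h0 h1 F1 G1 H1 hF1m hG1m hH1m hyp1
  rw [lintegral_prod f hf.aemeasurable, lintegral_prod g hg.aemeasurable,
    lintegral_prod h hh.aemeasurable]
  exact main

lemma isPL_transfer {E F : Type*} [MeasurableSpace E] [MeasurableSpace F]
    [AddCommMonoid E] [Module ℝ E] [AddCommMonoid F] [Module ℝ F]
    (e : E ≃ᵐ F) {μ : Measure E} {ν : Measure F} (hep : MeasurePreserving e μ ν)
    (heq : ∀ (c : ℝ) (x y : E), e (c • x + (1 - c) • y) = c • e x + (1 - c) • e y)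
    (hPL : IsPLMeasure F ν) : IsPLMeasure E μ := by
  intro θ h0 h1 f g h hf hg hh hyp
  have hsymm : ∀ (x y : F), e.symm (θ • x + (1 - θ) • y)
      = θ • e.symm x + (1 - θ) • e.symm y := by
    intro x y
    apply e.injective
    rw [heq θ (e.symm x) (e.symm y)]
    simp
  have key := hPL θ h0 h1 (f ∘ e.symm) (g ∘ e.symm) (h ∘ e.symm)
    (hf.comp e.symm.measurable) (hg.comp e.symm.measurable) (hh.comp e.symm.measurable)
    (fun x y => by
      simp only [Function.comp_apply]
      rw [hsymm x y]
      exact hyp (e.symm x) (e.symm y))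
  have hint : ∀ (F0 : E → ℝ≥0∞), Measurable F0 → ∫⁻ y, (F0 ∘ e.symm) y ∂ν = ∫⁻ x, F0 x ∂μ := by
    intro F0 hF0
    rw [← hep.map_eq, lintegral_map (hF0.comp e.symm.measurable) e.measurable]
    simp
  rw [hint f hf, hint g hg, hint h hh] at key
  exact key

lemma isPL_pi : ∀ d : ℕ, IsPLMeasure (Fin d → ℝ) volume := by
  intro d
  induction d with
  | zero =>
      intro θ h0 h1 f g h hf hg hh hyp
      rw [lintegral_unique f, lintegral_unique g, lintegral_unique h]
      have huniv : (volume : Measure (Fin 0 → ℝ)) univ = 1 := by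
        rw [volume_pi, Measure.pi_univ]
        simp
      rw [huniv, mul_one, mul_one, mul_one]
      have := hyp default default
      convert this using 3 <;>
        first
          | rfl
          | exact congrArg _ (Subsingleton.elim _ _)
  | succ d ih =>
      set e := MeasurableEquiv.piFinSuccAbove (fun _ : Fin (d + 1) => ℝ) 0 with he
      have hmp : MeasurePreserving e (volume : Measure (Fin (d + 1) → ℝ))
          ((volume : Measure ℝ).prod (volume : Measure (Fin d → ℝ))) := by
        have := measurePreserving_piFinSuccAbove (fun _ : Fin (d + 1) => (volume : Measure ℝ)) 0
        rw [volume_pi, volume_pi]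
        exact this
      refine isPL_transfer e hmp ?_ (isPL_prod isPL_real ih)
      intro c x y
      simp only [he, MeasurableEquiv.piFinSuccAbove]
      ext j <;> simp [Fin.insertNthEquiv, Prod.smul_def, Fin.tail]

/-- Lintegral against the standard Gaussian product measure as a weighted Lebesgue integral. -/
lemma lintegral_gauss_pi (d : ℕ) (F : (Fin d → ℝ) → ℝ≥0∞) (hF : Measurable F) :
    ∫⁻ x, F x ∂(Measure.pi fun _ : Fin d => gaussianReal 0 1)
      = ∫⁻ x, F x * ∏ i, gaussianPDF 0 1 (x i) ∂(volume : Measure (Fin d → ℝ)) := by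
  induction d with
  | zero =>
      rw [lintegral_unique F, lintegral_unique (fun x => F x * ∏ i, gaussianPDF 0 1 (x i))]
      have h1 : (Measure.pi fun _ : Fin 0 => gaussianReal 0 1) univ = 1 := by
        rw [Measure.pi_univ]; simp
      have h2 : (volume : Measure (Fin 0 → ℝ)) univ = 1 := by
        rw [volume_pi, Measure.pi_univ]; simp
      simp [h1, h2]
  | succ d ih =>
      set e := MeasurableEquiv.piFinSuccAbove (fun _ : Fin (d + 1) => ℝ) 0 with he
      have hmpG : MeasurePreserving e (Measure.pi fun _ : Fin (d + 1) => gaussianReal 0 1)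
          ((gaussianReal 0 1).prod (Measure.pi fun _ : Fin d => gaussianReal 0 1)) :=
        measurePreserving_piFinSuccAbove (fun _ : Fin (d + 1) => gaussianReal 0 1) 0
      have hmpV : MeasurePreserving e (volume : Measure (Fin (d + 1) → ℝ))
          ((volume : Measure ℝ).prod (volume : Measure (Fin d → ℝ))) := by
        have := measurePreserving_piFinSuccAbove (fun _ : Fin (d + 1) => (volume : Measure ℝ)) 0
        rw [volume_pi, volume_pi]
        exact this
      set H : ℝ × (Fin d → ℝ) → ℝ≥0∞ :=
        fun z => F (e.symm z) * (gaussianPDF 0 1 z.1 * ∏ j, gaussianPDF 0 1 (z.2 j)) with hH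
      have hHm : Measurable H := by
        apply Measurable.mul (hF.comp e.symm.measurable)
        apply Measurable.mul ((measurable_gaussianPDF 0 1).comp measurable_fst)
        exact Finset.measurable_prod _ fun j _ =>
          (measurable_gaussianPDF 0 1).comp ((measurable_pi_apply j).comp measurable_snd)
      have key1 : ∫⁻ x, F x ∂(Measure.pi fun _ : Fin (d + 1) => gaussianReal 0 1)
          = ∫⁻ z, (F ∘ ⇑e.symm) z
              ∂((gaussianReal 0 1).prod (Measure.pi fun _ : Fin d => gaussianReal 0 1)) := by
        rw [← hmpG.lintegral_comp (hF.comp e.symm.measurable)]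
        exact lintegral_congr fun x => by simp
      rw [key1, lintegral_prod _ (hF.comp e.symm.measurable).aemeasurable]
      have step2 : ∀ t : ℝ, (∫⁻ y, (F ∘ ⇑e.symm) (t, y) ∂(Measure.pi fun _ : Fin d => gaussianReal 0 1))
          = ∫⁻ y, (F ∘ ⇑e.symm) (t, y) * ∏ j, gaussianPDF 0 1 (y j) ∂(volume : Measure (Fin d → ℝ)) := by
        intro t
        exact ih (fun y => (F ∘ ⇑e.symm) (t, y))
          ((hF.comp e.symm.measurable).comp measurable_prodMk_left)
      simp_rw [step2]
      have hinnerm : Measurable fun t : ℝ =>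
          ∫⁻ y, (F ∘ ⇑e.symm) (t, y) * ∏ j, gaussianPDF 0 1 (y j) ∂(volume : Measure (Fin d → ℝ)) := by
        apply Measurable.lintegral_prod_right'
          (f := fun z : ℝ × (Fin d → ℝ) => (F ∘ ⇑e.symm) z * ∏ j, gaussianPDF 0 1 (z.2 j))
        apply Measurable.mul (hF.comp e.symm.measurable)
        exact Finset.measurable_prod _ fun j _ =>
          (measurable_gaussianPDF 0 1).comp ((measurable_pi_apply j).comp measurable_snd)
      rw [gaussianReal_of_var_ne_zero 0 one_ne_zero,
        lintegral_withDensity_eq_lintegral_mul volume (measurable_gaussianPDF 0 1) hinnerm]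
      have step3 : ∀ t : ℝ, (gaussianPDF 0 1 * fun t =>
            ∫⁻ y, (F ∘ ⇑e.symm) (t, y) * ∏ j, gaussianPDF 0 1 (y j)
              ∂(volume : Measure (Fin d → ℝ))) t
          = ∫⁻ y, H (t, y) ∂(volume : Measure (Fin d → ℝ)) := by
        intro t
        simp only [Pi.mul_apply]
        rw [← lintegral_const_mul _ (by
          apply Measurable.mul ((hF.comp e.symm.measurable).comp measurable_prodMk_left)
          exact Finset.measurable_prod _ fun j _ =>
            (measurable_gaussianPDF 0 1).comp (measurable_pi_apply j))]
        exact lintegral_congr fun y => by simp only [hH, Function.comp_apply]; ring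
      simp_rw [step3]
      rw [← lintegral_prod _ hHm.aemeasurable, ← hmpV.lintegral_comp hHm]
      refine lintegral_congr fun x => ?_
      have hcomp : H (e x) = F x * (gaussianPDF 0 1 (x 0) *
          ∏ j, gaussianPDF 0 1 (x ((0 : Fin (d + 1)).succAbove j))) := by
        simp only [hH]
        have h1 : e.symm (e x) = x := e.symm_apply_apply x
        have h2 : (e x).1 = x 0 := by
          rw [he, MeasurableEquiv.piFinSuccAbove_apply]
          simp [Fin.insertNthEquiv]
        have h3 : ∀ j, (e x).2 j = x ((0 : Fin (d + 1)).succAbove j) := by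
          intro j
          rw [he, MeasurableEquiv.piFinSuccAbove_apply]
          simp [Fin.insertNthEquiv, Fin.tail]
        rw [h1, h2]
        congr 2
      rw [hcomp, ← Fin.prod_univ_succAbove (fun i => gaussianPDF 0 1 (x i)) 0]

/-- Prékopa-type theorem (finite-dimensional consequence): if `(x,c) ↦ g x c − |x|²/2` is
concave and each `g(·,c)` satisfies the negative-part moment condition, then
`c ↦ log E[e^{g(Z,c)}]` is concave (with `log ∞ = ∞`), stated multiplicatively via
`∫ e^{g(·,c₁)} dμ)^θ (∫ e^{g(·,c₂)} dμ)^{1−θ} ≤ ∫ e^{g(·,θc₁+(1−θ)c₂)} dμ`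
for the standard Gaussian `μ` on `ℝ^d`. -/
theorem prekopa_gaussian_finite_dim (d : ℕ) (g : (Fin d → ℝ) → ℝ → ℝ)
    (hmeas : ∀ c : ℝ, Measurable fun x => g x c)
    (hconc : ConcaveOn ℝ Set.univ
      (fun p : (Fin d → ℝ) × ℝ => g p.1 p.2 - (∑ i, p.1 i ^ 2) / 2))
    (hint : ∀ c : ℝ, ∃ δ : ℝ, 0 < δ ∧
      Integrable (fun x => (max (-(g x c)) 0) ^ (1 + δ))
        (Measure.pi fun _ : Fin d => gaussianReal 0 1))
    (c₁ c₂ θ : ℝ) (hθ : θ ∈ Set.Icc (0:ℝ) 1) :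
    (∫⁻ x, ENNReal.ofReal (Real.exp (g x c₁))
        ∂(Measure.pi fun _ : Fin d => gaussianReal 0 1)) ^ θ *
      (∫⁻ x, ENNReal.ofReal (Real.exp (g x c₂))
        ∂(Measure.pi fun _ : Fin d => gaussianReal 0 1)) ^ (1 - θ) ≤
      ∫⁻ x, ENNReal.ofReal (Real.exp (g x (θ * c₁ + (1 - θ) * c₂)))
        ∂(Measure.pi fun _ : Fin d => gaussianReal 0 1) := by
  obtain ⟨hθ0, hθ1⟩ := hθ
  -- trivial endpoint cases
  rcases eq_or_lt_of_le hθ0 with hθ0' | hθ0'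
  · rw [← hθ0']
    norm_num
  rcases eq_or_lt_of_le hθ1 with hθ1' | hθ1'
  · rw [hθ1']
    norm_num
  -- notation
  set q : (Fin d → ℝ) → ℝ := fun x => (∑ i, x i ^ 2) / 2 with hqdef
  have hqm : Measurable q :=
    (Finset.measurable_sum Finset.univ fun i _ =>
      (measurable_pi_apply i).pow_const 2).div_const 2
  have hmint : ∀ c : ℝ, Measurable fun x => ENNReal.ofReal (Real.exp (g x c - q x)) := fun c => by
    exact ENNReal.measurable_ofReal.comp (Real.measurable_exp.comp ((hmeas c).sub hqm))
  -- Gaussian lintegral as weighted Lebesgue integral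
  have key : ∀ c : ℝ, ∫⁻ x, ENNReal.ofReal (Real.exp (g x c))
      ∂(Measure.pi fun _ : Fin d => gaussianReal 0 1)
      = ENNReal.ofReal ((Real.sqrt (2 * Real.pi))⁻¹ ^ d)
        * ∫⁻ x, ENNReal.ofReal (Real.exp (g x c - q x)) ∂(volume : Measure (Fin d → ℝ)) := by
    intro c
    rw [lintegral_gauss_pi d (fun x => ENNReal.ofReal (Real.exp (g x c)))
      (by exact ENNReal.measurable_ofReal.comp (Real.measurable_exp.comp (hmeas c)))]
    have ptwise : ∀ x : Fin d → ℝ, ENNReal.ofReal (Real.exp (g x c)) * ∏ i, gaussianPDF 0 1 (x i)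
        = ENNReal.ofReal ((Real.sqrt (2 * Real.pi))⁻¹ ^ d)
          * ENNReal.ofReal (Real.exp (g x c - q x)) := by
      intro x
      have hprodreal : ∏ i, gaussianPDFReal 0 1 (x i)
          = (Real.sqrt (2 * Real.pi))⁻¹ ^ d * Real.exp (- q x) := by
        simp only [gaussianPDFReal_def, NNReal.coe_one, mul_one, sub_zero]
        rw [Finset.prod_mul_distrib, Finset.prod_const, ← Real.exp_sum]
        congr 2
        · simp [Finset.card_univ]
        · simp only [hqdef]
          rw [← Finset.sum_div, Finset.sum_neg_distrib, neg_div]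
      have hpdf : (∏ i, gaussianPDF 0 1 (x i))
          = ENNReal.ofReal ((Real.sqrt (2 * Real.pi))⁻¹ ^ d * Real.exp (- q x)) := by
        rw [gaussianPDF_def, ← hprodreal]
        exact (ENNReal.ofReal_prod_of_nonneg fun i _ => gaussianPDFReal_nonneg 0 1 (x i)).symm
      rw [hpdf, ← ENNReal.ofReal_mul (Real.exp_pos _).le,
        ← ENNReal.ofReal_mul (by positivity)]
      congr 1
      rw [show g x c - q x = g x c + (- q x) by ring, Real.exp_add]
      ring
    simp_rw [ptwise]
    rw [lintegral_const_mul _ (hmint c)]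
  rw [key c₁, key c₂, key (θ * c₁ + (1 - θ) * c₂)]
  set C := ENNReal.ofReal ((Real.sqrt (2 * Real.pi))⁻¹ ^ d) with hC
  have hC0 : C ≠ 0 := by
    rw [hC, Ne, ENNReal.ofReal_eq_zero, not_le]
    positivity
  have hCt : C ≠ ∞ := ENNReal.ofReal_ne_top
  have h1θ : 0 < 1 - θ := by linarith
  -- apply Prékopa–Leindler
  have hPL := isPL_pi d θ hθ0' hθ1'
    (fun x => ENNReal.ofReal (Real.exp (g x c₁ - q x)))
    (fun x => ENNReal.ofReal (Real.exp (g x c₂ - q x)))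
    (fun x => ENNReal.ofReal (Real.exp (g x (θ * c₁ + (1 - θ) * c₂) - q x)))
    (hmint c₁) (hmint c₂) (hmint _)
    (by
      intro x y
      have hre : ∀ a : ℝ, ENNReal.ofReal (Real.exp a) ^ θ = ENNReal.ofReal (Real.exp (θ * a)) := by
        intro a
        rw [ENNReal.ofReal_rpow_of_pos (Real.exp_pos a), mul_comm, Real.exp_mul]
      have hre2 : ∀ a : ℝ, ENNReal.ofReal (Real.exp a) ^ (1 - θ)
          = ENNReal.ofReal (Real.exp ((1 - θ) * a)) := by
        intro a
        rw [ENNReal.ofReal_rpow_of_pos (Real.exp_pos a), mul_comm, Real.exp_mul]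
      rw [hre, hre2, ← ENNReal.ofReal_mul (Real.exp_pos _).le, ← Real.exp_add]
      apply ENNReal.ofReal_le_ofReal
      apply Real.exp_le_exp.2
      have hcc := hconc.2 (Set.mem_univ ((x, c₁) : (Fin d → ℝ) × ℝ))
        (Set.mem_univ ((y, c₂) : (Fin d → ℝ) × ℝ)) hθ0'.le h1θ.le (by ring)
      have hpt : (θ • ((x, c₁) : (Fin d → ℝ) × ℝ) + (1 - θ) • ((y, c₂) : (Fin d → ℝ) × ℝ))
          = (θ • x + (1 - θ) • y, θ * c₁ + (1 - θ) * c₂) := by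
        simp [Prod.ext_iff, smul_eq_mul]
      rw [hpt] at hcc
      simp only [smul_eq_mul] at hcc
      calc θ * (g x c₁ - q x) + (1 - θ) * (g y c₂ - q y)
          ≤ g (θ • x + (1 - θ) • y) (θ * c₁ + (1 - θ) * c₂)
            - (∑ i, (θ • x + (1 - θ) • y) i ^ 2) / 2 := hcc
        _ = g (θ • x + (1 - θ) • y) (θ * c₁ + (1 - θ) * c₂) - q (θ • x + (1 - θ) • y) := rfl)
  rw [ENNReal.mul_rpow_of_nonneg _ _ hθ0'.le, ENNReal.mul_rpow_of_nonneg _ _ h1θ.le]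
  calc C ^ θ * (∫⁻ x, ENNReal.ofReal (Real.exp (g x c₁ - q x))) ^ θ
        * (C ^ (1 - θ) * (∫⁻ x, ENNReal.ofReal (Real.exp (g x c₂ - q x))) ^ (1 - θ))
      = (C ^ θ * C ^ (1 - θ)) * ((∫⁻ x, ENNReal.ofReal (Real.exp (g x c₁ - q x))) ^ θ
          * (∫⁻ x, ENNReal.ofReal (Real.exp (g x c₂ - q x))) ^ (1 - θ)) := by ring
    _ = C * ((∫⁻ x, ENNReal.ofReal (Real.exp (g x c₁ - q x))) ^ θ
          * (∫⁻ x, ENNReal.ofReal (Real.exp (g x c₂ - q x))) ^ (1 - θ)) := by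
        rw [← ENNReal.rpow_add _ _ hC0 hCt]
        norm_num
    _ ≤ C * ∫⁻ x, ENNReal.ofReal (Real.exp (g x (θ * c₁ + (1 - θ) * c₂) - q x)) :=
        mul_le_mul_right hPL C
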